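/- Let A₁, A₂ ⊆ E be nonempty compact sets and let 0 ≤ λ ≤ 1. Then for every x ∈ E, the Clarke subdifferential of Φ_λ at x satisfies ∂^C Φ_λ(x) = convexHull ℝ {2λ(x − a₁) + 2(1−λ)(x − a₂) : a₁ ∈ Π_{A₁}(x), a₂ ∈ Π_{A₂}(x)}. -/

import Mathlib

open MeasureTheory Metric Filter Topology
open scoped RealInnerProductSpace

/-- The set `Π_A(x)` of nearest points of `x` in `A`. -/
def nearestPts {d : ℕ} (A : Set (EuclideanSpace ℝ (Fin d)))
    (x : EuclideanSpace ℝ (Fin d)) : Set (EuclideanSpace ℝ (Fin d)) :=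
  {a ∈ A | ‖x - a‖ = Metric.infDist x A}

/-- The geometric distance potential `Φ_λ(x) = λ d_{A₁}(x)² + (1-λ) d_{A₂}(x)²`. -/
noncomputable def distPotential {d : ℕ} (A₁ A₂ : Set (EuclideanSpace ℝ (Fin d))) (lam : ℝ)
    (x : EuclideanSpace ℝ (Fin d)) : ℝ :=
  lam * (Metric.infDist x A₁) ^ 2 + (1 - lam) * (Metric.infDist x A₂) ^ 2

/-- The Clarke subdifferential of `f : E → ℝ` at `x`: the convex hull of all limits of
gradients of `f` along sequences of differentiability points converging to `x`. -/
def clarkeSubdiff {d : ℕ} (f : EuclideanSpace ℝ (Fin d) → ℝ)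
    (x : EuclideanSpace ℝ (Fin d)) : Set (EuclideanSpace ℝ (Fin d)) :=
  convexHull ℝ
    {v | ∃ u : ℕ → EuclideanSpace ℝ (Fin d),
      Filter.Tendsto u Filter.atTop (nhds x) ∧
      (∀ k, DifferentiableAt ℝ f (u k)) ∧
      Filter.Tendsto (fun k => gradient f (u k)) Filter.atTop (nhds v)}

section Aux

variable {d : ℕ}

local notation "E" => EuclideanSpace ℝ (Fin d)

lemma nearest_exists {A : Set E} (hA : IsCompact A) (hne : A.Nonempty) (x : E) :
    ∃ a, a ∈ nearestPts A x := by
  obtain ⟨y, hy, hyd⟩ := hA.exists_infDist_eq_dist hne x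
  exact ⟨y, hy, by rw [← dist_eq_norm]; exact hyd.symm⟩

lemma nearest_lim {A : Set E} (hA : IsClosed A) {u p : ℕ → E} {x q : E}
    (hu : Filter.Tendsto u atTop (nhds x)) (hp : ∀ k, p k ∈ nearestPts A (u k))
    (hq : Filter.Tendsto p atTop (nhds q)) : q ∈ nearestPts A x := by
  refine ⟨hA.mem_of_tendsto hq (Filter.Eventually.of_forall fun k => (hp k).1), ?_⟩
  have h1 : Filter.Tendsto (fun k => ‖u k - p k‖) atTop (nhds ‖x - q‖) :=
    (hu.sub hq).norm
  have h2 : Filter.Tendsto (fun k => ‖u k - p k‖) atTop (nhds (infDist x A)) := by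
    have h3 : Filter.Tendsto (fun k => infDist (u k) A) atTop (nhds (infDist x A)) :=
      ((continuous_infDist_pt A).continuousAt).tendsto.comp hu
    exact h3.congr fun k => ((hp k).2).symm
  exact tendsto_nhds_unique h1 h2

lemma nearest_compact {A : Set E} (hA : IsCompact A) (x : E) :
    IsCompact (nearestPts A x) := by
  have hcl : IsClosed (nearestPts A x) := by
    have h : nearestPts A x = A ∩ {a | ‖x - a‖ = infDist x A} := rfl
    rw [h]
    exact hA.isClosed.inter (isClosed_eq (by continuity) continuous_const)
  exact hA.of_isClosed_subset hcl fun a ha => ha.1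

/-- Sum of a function extended by zero along an injection. -/
lemma sum_extend_zero {ι κ M : Type*} [Fintype ι] [Fintype κ] [DecidableEq κ]
    [AddCommMonoid M] (e : ι ↪ κ) (f : ι → M) :
    ∑ j, Function.extend e f 0 j = ∑ i, f i := by
  rw [← Finset.sum_subset (Finset.subset_univ (Finset.univ.map e))]
  · rw [Finset.sum_map]
    exact Finset.sum_congr rfl fun i _ => e.injective.extend_apply f 0 i
  · intro j _ hj
    apply Function.extend_apply'
    rintro ⟨i, rfl⟩
    exact hj (Finset.mem_map_of_mem e (Finset.mem_univ i))

/-- The convex hull of a compact set in Euclidean space is compact. -/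
lemma isCompact_convexHull_euclidean {S : Set E} (hS : IsCompact S) (hne : S.Nonempty) :
    IsCompact (convexHull ℝ S) := by
  classical
  obtain ⟨s₀, hs₀⟩ := hne
  set n := d + 1 with hn
  set g : (Fin n → ℝ) × (Fin n → E) → E := fun p => ∑ i, p.1 i • p.2 i with hg
  have hgc : Continuous g := by
    apply continuous_finset_sum
    intro i _
    exact ((continuous_apply i).comp continuous_fst).smul
      ((continuous_apply i).comp continuous_snd)
  have hD : IsCompact ((stdSimplex ℝ (Fin n)) ×ˢ (Set.pi Set.univ fun _ : Fin n => S)) :=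
    (isCompact_stdSimplex (𝕜 := ℝ) (ι := Fin n)).prod (isCompact_univ_pi fun _ => hS)
  have himg : g '' ((stdSimplex ℝ (Fin n)) ×ˢ (Set.pi Set.univ fun _ : Fin n => S))
      = convexHull ℝ S := by
    apply Set.Subset.antisymm
    · rintro _ ⟨⟨w, z⟩, ⟨⟨hw0, hw1⟩, hz⟩, rfl⟩
      exact mem_convexHull_of_exists_fintype w z hw0 hw1
        (fun i => hz i (Set.mem_univ i)) rfl
    · intro y hy
      obtain ⟨ι, hfin, z, w, hrange, hindep, hpos, hsum, hcomb⟩ :=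
        eq_pos_convex_span_of_mem_convexHull hy
      have hcard : Fintype.card ι ≤ n := by
        have h1 := hindep.card_le_finrank_succ
        have h2 : Module.finrank ℝ (vectorSpan ℝ (Set.range z)) ≤ d := by
          have := Submodule.finrank_le (vectorSpan ℝ (Set.range z))
          rwa [finrank_euclideanSpace_fin] at this
        omega
      obtain ⟨e⟩ := Function.Embedding.nonempty_of_card_le (β := Fin n)
        (by simpa using hcard)
      refine ⟨(Function.extend e w 0, Function.extend e z fun _ => s₀), ⟨⟨?_, ?_⟩, ?_⟩, ?_⟩
      · intro j
        dsimp only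
        rcases em (∃ i, (e : ι → Fin n) i = j) with ⟨i, rfl⟩ | hj
        · rw [e.injective.extend_apply]
          exact (hpos i).le
        · rw [Function.extend_apply' _ _ _ hj]
          simp
      · dsimp only
        rw [sum_extend_zero]
        exact hsum
      · intro j _
        dsimp only
        rcases em (∃ i, (e : ι → Fin n) i = j) with ⟨i, rfl⟩ | hj
        · rw [e.injective.extend_apply]
          exact hrange (Set.mem_range_self i)
        · rw [Function.extend_apply' _ _ _ hj]
          exact hs₀
      · show (∑ j, Function.extend e w 0 j • Function.extend e z (fun _ => s₀) j) = y
        have hsz : ∀ j, Function.extend e w 0 j • Function.extend e z (fun _ => s₀) j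
            = Function.extend e (fun i => w i • z i) 0 j := by
          intro j
          rcases em (∃ i, (e : ι → Fin n) i = j) with ⟨i, rfl⟩ | hj
          · rw [e.injective.extend_apply, e.injective.extend_apply,
              e.injective.extend_apply]
          · rw [Function.extend_apply' _ _ _ hj, Function.extend_apply' _ _ _ hj,
              Function.extend_apply' _ _ _ hj]
            simp
        calc (∑ j, Function.extend e w 0 j • Function.extend e z (fun _ => s₀) j)
            = ∑ j, Function.extend e (fun i => w i • z i) 0 j :=
              Finset.sum_congr rfl fun j _ => hsz j
          _ = ∑ i, w i • z i := sum_extend_zero e _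
          _ = y := hcomb
  rw [← himg]
  exact hD.image hgc

/-- Key geometric inequality relating nearest points at a perturbed base point. -/
lemma inner_step {x z w b p : E} {t : ℝ}
    (h1 : ‖z - p‖ ≤ ‖z - b‖) (h2 : ‖x - b‖ ≤ ‖x - p‖) :
    t * ⟪w, p⟫ ≤ t * ⟪w, b⟫ + ⟪z - x + t • w, p - b⟫ := by
  have e1 : ⟪z - p, z - p⟫ ≤ ⟪z - b, z - b⟫ := by
    rw [real_inner_self_eq_norm_sq, real_inner_self_eq_norm_sq]
    exact pow_le_pow_left₀ (norm_nonneg _) h1 2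
  have e2 : ⟪x - b, x - b⟫ ≤ ⟪x - p, x - p⟫ := by
    rw [real_inner_self_eq_norm_sq, real_inner_self_eq_norm_sq]
    exact pow_le_pow_left₀ (norm_nonneg _) h2 2
  simp only [inner_sub_left, inner_sub_right, inner_add_left, inner_add_right,
    real_inner_smul_left, real_inner_smul_right] at e1 e2 ⊢
  have c1 := real_inner_comm z p
  have c2 := real_inner_comm z b
  have c3 := real_inner_comm x p
  have c4 := real_inner_comm x b
  have c5 := real_inner_comm p b
  have c6 := real_inner_comm w p
  have c7 := real_inner_comm w b
  linarith

lemma differentiableAt_distPotential {A₁ A₂ : Set E} {lam : ℝ} {z : E}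
    (h1 : DifferentiableAt ℝ (fun y : E => infDist y A₁) z)
    (h2 : DifferentiableAt ℝ (fun y : E => infDist y A₂) z) :
    DifferentiableAt ℝ (distPotential A₁ A₂ lam) z := by
  unfold distPotential
  exact ((h1.pow 2).const_mul lam).add ((h2.pow 2).const_mul (1 - lam))

/-- At a point of differentiability, the gradient of the distance potential is given by
any pair of nearest points. -/
lemma grad_formula {A₁ A₂ : Set E} {lam : ℝ} (hlam₀ : 0 ≤ lam) (hlam₁ : lam ≤ 1)
    {z p₁ p₂ : E} (hp₁ : p₁ ∈ nearestPts A₁ z) (hp₂ : p₂ ∈ nearestPts A₂ z)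
    (hdiff : DifferentiableAt ℝ (distPotential A₁ A₂ lam) z) :
    gradient (distPotential A₁ A₂ lam) z
      = (2 * lam) • (z - p₁) + (2 * (1 - lam)) • (z - p₂) := by
  set Φ := distPotential A₁ A₂ lam with hΦ
  set V : E := (2 * lam) • (z - p₁) + (2 * (1 - lam)) • (z - p₂) with hV
  set G : E := gradient Φ z with hG
  have hub : ∀ u : E, Φ (z + u) ≤ Φ z + ⟪V, u⟫ + ‖u‖ ^ 2 := by
    intro u
    have hd1 : infDist (z + u) A₁ ≤ ‖z + u - p₁‖ := by
      rw [← dist_eq_norm]; exact infDist_le_dist_of_mem hp₁.1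
    have hd2 : infDist (z + u) A₂ ≤ ‖z + u - p₂‖ := by
      rw [← dist_eq_norm]; exact infDist_le_dist_of_mem hp₂.1
    have hs1 : (infDist (z + u) A₁) ^ 2 ≤ ‖z + u - p₁‖ ^ 2 :=
      pow_le_pow_left₀ infDist_nonneg hd1 2
    have hs2 : (infDist (z + u) A₂) ^ 2 ≤ ‖z + u - p₂‖ ^ 2 :=
      pow_le_pow_left₀ infDist_nonneg hd2 2
    have hn1 : ‖z + u - p₁‖ ^ 2 = infDist z A₁ ^ 2 + 2 * ⟪z - p₁, u⟫ + ‖u‖ ^ 2 := by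
      have : z + u - p₁ = (z - p₁) + u := by abel
      rw [this, norm_add_sq_real, hp₁.2]
    have hn2 : ‖z + u - p₂‖ ^ 2 = infDist z A₂ ^ 2 + 2 * ⟪z - p₂, u⟫ + ‖u‖ ^ 2 := by
      have : z + u - p₂ = (z - p₂) + u := by abel
      rw [this, norm_add_sq_real, hp₂.2]
    have hVu : ⟪V, u⟫ = 2 * lam * ⟪z - p₁, u⟫ + 2 * (1 - lam) * ⟪z - p₂, u⟫ := by
      rw [hV, inner_add_left, real_inner_smul_left, real_inner_smul_left]
    have e1 : lam * (infDist (z + u) A₁) ^ 2 ≤ lam * ‖z + u - p₁‖ ^ 2 :=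
      mul_le_mul_of_nonneg_left hs1 hlam₀
    have e2 : (1 - lam) * (infDist (z + u) A₂) ^ 2 ≤ (1 - lam) * ‖z + u - p₂‖ ^ 2 :=
      mul_le_mul_of_nonneg_left hs2 (by linarith)
    have hΦz : Φ z = lam * infDist z A₁ ^ 2 + (1 - lam) * infDist z A₂ ^ 2 := rfl
    have hΦzu : Φ (z + u) = lam * (infDist (z + u) A₁) ^ 2
        + (1 - lam) * (infDist (z + u) A₂) ^ 2 := rfl
    rw [hΦzu, hΦz, hVu]
    nlinarith [hn1, hn2]
  have hkey : ∀ u : E, ⟪G, u⟫ ≤ ⟪V, u⟫ := by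
    intro u
    have hgr : HasGradientAt Φ G z := hdiff.hasGradientAt
    have hfd : HasFDerivAt Φ (InnerProductSpace.toDual ℝ _ G) z :=
      hasGradientAt_iff_hasFDerivAt.mp hgr
    have hline : HasDerivAt (fun t : ℝ => z + t • u) u 0 := by
      simpa using ((hasDerivAt_id (0 : ℝ)).smul_const u).const_add z
    have hc : HasDerivAt (fun t : ℝ => Φ (z + t • u)) ⟪G, u⟫ 0 := by
      have := hfd.comp_hasDerivAt_of_eq 0 hline (by simp)
      simpa [InnerProductSpace.toDual_apply_apply, Function.comp_def] using this
    set φ : ℝ → ℝ := fun t => Φ (z + t • u) with hφ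
    have hslope : Filter.Tendsto (slope φ 0) (nhdsWithin 0 (Set.Ioi 0)) (nhds ⟪G, u⟫) :=
      (hasDerivAt_iff_tendsto_slope.mp hc).mono_left
        (nhdsWithin_mono 0 fun t (ht : t ∈ Set.Ioi 0) => ne_of_gt ht)
    have hbnd : Filter.Tendsto (fun t : ℝ => ⟪V, u⟫ + t * ‖u‖ ^ 2)
        (nhdsWithin 0 (Set.Ioi 0)) (nhds ⟪V, u⟫) := by
      have : Filter.Tendsto (fun t : ℝ => ⟪V, u⟫ + t * ‖u‖ ^ 2) (nhds 0)
          (nhds (⟪V, u⟫ + 0 * ‖u‖ ^ 2)) := by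
        exact (continuous_const.add (continuous_id.mul continuous_const)).tendsto 0
      simpa using this.mono_left nhdsWithin_le_nhds
    refine le_of_tendsto_of_tendsto hslope hbnd ?_
    filter_upwards [self_mem_nhdsWithin] with t (ht : t ∈ Set.Ioi 0)
    have ht0 : (0 : ℝ) < t := ht
    have hφt : φ t ≤ φ 0 + t * ⟪V, u⟫ + t ^ 2 * ‖u‖ ^ 2 := by
      have := hub (t • u)
      rw [real_inner_smul_right] at this
      have hns : ‖t • u‖ ^ 2 = t ^ 2 * ‖u‖ ^ 2 := by
        rw [norm_smul, mul_pow, Real.norm_eq_abs, sq_abs]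
      rw [hns] at this
      simpa [hφ] using this
    show slope φ 0 t ≤ ⟪V, u⟫ + t * ‖u‖ ^ 2
    rw [slope_def_field, sub_zero, div_le_iff₀ ht0]
    nlinarith [hφt]
  have hGV : G = V := by
    have h1 := hkey (G - V)
    have h2 : ⟪G - V, G - V⟫ ≤ 0 := by
      rw [inner_sub_left]; linarith
    have := real_inner_self_nonpos.mp h2
    exact sub_eq_zero.mp this
  exact hGV

/-- Points of differentiability of the potential are dense. -/
lemma exists_diff_near (A₁ A₂ : Set E) (lam : ℝ) (y : E) {δ : ℝ} (hδ : 0 < δ) :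
    ∃ z : E, dist z y < δ ∧ DifferentiableAt ℝ (distPotential A₁ A₂ lam) z := by
  have h₁ : ∀ᵐ z ∂(volume : Measure E), DifferentiableAt ℝ (fun w : E => infDist w A₁) z :=
    (lipschitz_infDist_pt A₁).ae_differentiableAt
  have h₂ : ∀ᵐ z ∂(volume : Measure E), DifferentiableAt ℝ (fun w : E => infDist w A₂) z :=
    (lipschitz_infDist_pt A₂).ae_differentiableAt
  have h := h₁.and h₂
  have hball : 0 < (volume : Measure E) (ball y δ) := measure_ball_pos _ _ hδ
  by_contra hc
  push_neg at hc
  have hsub : ball y δ ⊆ {z : E | ¬ (DifferentiableAt ℝ (fun w : E => infDist w A₁) z ∧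
      DifferentiableAt ℝ (fun w : E => infDist w A₂) z)} := by
    intro z hz
    intro hzd
    exact hc z (by rwa [mem_ball] at hz) (differentiableAt_distPotential hzd.1 hzd.2)
  have : (volume : Measure E) (ball y δ) = 0 := by
    refine le_antisymm (le_trans (measure_mono hsub) ?_) zero_le
    rw [ae_iff] at h
    exact le_of_eq h
  exact absurd this hball.ne'

/-- The set of limiting gradients is closed. -/
lemma limitSet_closed (f : E → ℝ) (x : E) :
    IsClosed {v : E | ∃ u : ℕ → E,
      Filter.Tendsto u Filter.atTop (nhds x) ∧
      (∀ k, DifferentiableAt ℝ f (u k)) ∧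
      Filter.Tendsto (fun k => gradient f (u k)) Filter.atTop (nhds v)} := by
  apply IsSeqClosed.isClosed
  intro v l hv hvl
  have hsel : ∀ n : ℕ, ∃ z : E, dist z x < 1 / (n + 1) ∧ DifferentiableAt ℝ f z ∧
      dist (gradient f z) (v n) < 1 / (n + 1) := by
    intro n
    obtain ⟨u, hu, hud, hug⟩ := hv n
    have hpos : (0 : ℝ) < 1 / (n + 1) := by positivity
    obtain ⟨N₁, hN₁⟩ := Metric.tendsto_atTop.mp hu (1 / (n + 1)) hpos
    obtain ⟨N₂, hN₂⟩ := Metric.tendsto_atTop.mp hug (1 / (n + 1)) hpos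
    exact ⟨u (max N₁ N₂), hN₁ _ (le_max_left _ _), hud _, hN₂ _ (le_max_right _ _)⟩
  choose z hz₁ hz₂ hz₃ using hsel
  refine ⟨z, ?_, hz₂, ?_⟩
  · rw [tendsto_iff_dist_tendsto_zero]
    exact squeeze_zero (fun n => dist_nonneg) (fun n => (hz₁ n).le)
      tendsto_one_div_add_atTop_nhds_zero_nat
  · rw [tendsto_iff_dist_tendsto_zero]
    have hb : ∀ n, dist (gradient f (z n)) l ≤ 1 / (n + 1) + dist (v n) l := fun n =>
      le_trans (dist_triangle _ (v n) l) (by linarith [(hz₃ n).le])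
    have hlim : Filter.Tendsto (fun n : ℕ => 1 / ((n : ℝ) + 1) + dist (v n) l) atTop
        (nhds 0) := by
      have := tendsto_one_div_add_atTop_nhds_zero_nat.add
        (tendsto_iff_dist_tendsto_zero.mp hvl)
      simpa using this
    exact squeeze_zero (fun n => dist_nonneg) hb hlim

/-- Extraction of convergent subsequences of nearest points. -/
lemma subseq_nearest {A₁ A₂ : Set E} (hA₁cpt : IsCompact A₁) (hA₂cpt : IsCompact A₂)
    {u : ℕ → E} {x : E} (hu : Filter.Tendsto u atTop (nhds x)) {p₁ p₂ : ℕ → E}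
    (hp₁ : ∀ k, p₁ k ∈ nearestPts A₁ (u k)) (hp₂ : ∀ k, p₂ k ∈ nearestPts A₂ (u k)) :
    ∃ (σ : ℕ → ℕ) (q₁ q₂ : E), Filter.Tendsto σ atTop atTop ∧
      q₁ ∈ nearestPts A₁ x ∧ q₂ ∈ nearestPts A₂ x ∧
      Filter.Tendsto (fun k => p₁ (σ k)) atTop (nhds q₁) ∧
      Filter.Tendsto (fun k => p₂ (σ k)) atTop (nhds q₂) := by
  obtain ⟨q₁, hq₁A, φ, hφ, hφlim⟩ := hA₁cpt.tendsto_subseq (fun k => (hp₁ k).1)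
  obtain ⟨q₂, hq₂A, ψ, hψ, hψlim⟩ := hA₂cpt.tendsto_subseq (x := fun k => p₂ (φ k))
    (fun k => (hp₂ (φ k)).1)
  set σ : ℕ → ℕ := φ ∘ ψ with hσ
  have hσtop : Filter.Tendsto σ atTop atTop := (hφ.comp hψ).tendsto_atTop
  have h1 : Filter.Tendsto (fun k => p₁ (σ k)) atTop (nhds q₁) :=
    hφlim.comp hψ.tendsto_atTop
  have h2 : Filter.Tendsto (fun k => p₂ (σ k)) atTop (nhds q₂) := hψlim
  have huσ : Filter.Tendsto (fun k => u (σ k)) atTop (nhds x) := hu.comp hσtop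
  exact ⟨σ, q₁, q₂, hσtop,
    nearest_lim hA₁cpt.isClosed huσ (fun k => hp₁ (σ k)) h1,
    nearest_lim hA₂cpt.isClosed huσ (fun k => hp₂ (σ k)) h2, h1, h2⟩

end Aux

theorem clarke_subdiff_distPotential_moe
    (d : ℕ) (hd : 1 ≤ d)
    (A₁ A₂ : Set (EuclideanSpace ℝ (Fin d)))
    (hA₁ : A₁.Nonempty) (hA₂ : A₂.Nonempty)
    (hA₁cpt : IsCompact A₁) (hA₂cpt : IsCompact A₂)
    (lam : ℝ) (hlam₀ : 0 ≤ lam) (hlam₁ : lam ≤ 1) :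
    ∀ x : EuclideanSpace ℝ (Fin d),
      clarkeSubdiff (distPotential A₁ A₂ lam) x =
        convexHull ℝ
          (Set.image2 (fun a₁ a₂ => (2 * lam) • (x - a₁) + (2 * (1 - lam)) • (x - a₂))
            (nearestPts A₁ x) (nearestPts A₂ x)) := by
  classical
  intro x
  set Φ := distPotential A₁ A₂ lam with hΦ
  set f : EuclideanSpace ℝ (Fin d) → EuclideanSpace ℝ (Fin d) → EuclideanSpace ℝ (Fin d) := fun a₁ a₂ => (2 * lam) • (x - a₁) + (2 * (1 - lam)) • (x - a₂)
    with hf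
  set S : Set (EuclideanSpace ℝ (Fin d)) := {v | ∃ u : ℕ → EuclideanSpace ℝ (Fin d),
      Filter.Tendsto u Filter.atTop (nhds x) ∧
      (∀ k, DifferentiableAt ℝ Φ (u k)) ∧
      Filter.Tendsto (fun k => gradient Φ (u k)) Filter.atTop (nhds v)} with hS
  set T : Set (EuclideanSpace ℝ (Fin d)) := Set.image2 f (nearestPts A₁ x) (nearestPts A₂ x) with hT
  -- the inclusion S ⊆ T
  have hST : S ⊆ T := by
    rintro v ⟨u, hu, hud, hug⟩
    choose p₁ hp₁ using fun k => nearest_exists hA₁cpt hA₁ (u k)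
    choose p₂ hp₂ using fun k => nearest_exists hA₂cpt hA₂ (u k)
    obtain ⟨σ, q₁, q₂, hσtop, hq₁, hq₂, hlim₁, hlim₂⟩ :=
      subseq_nearest hA₁cpt hA₂cpt hu hp₁ hp₂
    have hgradeq : (fun k => gradient Φ (u (σ k))) =
        fun k => (2 * lam) • (u (σ k) - p₁ (σ k)) + (2 * (1 - lam)) • (u (σ k) - p₂ (σ k)) :=
      funext fun k => grad_formula hlam₀ hlam₁ (hp₁ (σ k)) (hp₂ (σ k)) (hud (σ k))
    have hg1 : Filter.Tendsto (fun k => gradient Φ (u (σ k))) atTop (nhds (f q₁ q₂)) := by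
      rw [hgradeq]
      exact ((((hu.comp hσtop).sub hlim₁).const_smul (2 * lam)).add
        (((hu.comp hσtop).sub hlim₂).const_smul (2 * (1 - lam))))
    have hg2 : Filter.Tendsto (fun k => gradient Φ (u (σ k))) atTop (nhds v) :=
      hug.comp hσtop
    have : v = f q₁ q₂ := tendsto_nhds_unique hg2 hg1
    rw [this]
    exact Set.mem_image2_of_mem hq₁ hq₂
  -- construction of elements of S with controlled inner products
  have construct : ∀ (w b₁ b₂ : EuclideanSpace ℝ (Fin d)), b₁ ∈ nearestPts A₁ x → b₂ ∈ nearestPts A₂ x →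
      ∃ q₁ ∈ nearestPts A₁ x, ∃ q₂ ∈ nearestPts A₂ x,
        ⟪w, q₁⟫ ≤ ⟪w, b₁⟫ ∧ ⟪w, q₂⟫ ≤ ⟪w, b₂⟫ ∧ f q₁ q₂ ∈ S := by
    intro w b₁ b₂ hb₁ hb₂
    obtain ⟨R, hR⟩ := (hA₁cpt.union hA₂cpt).isBounded.subset_closedBall 0
    set C : ℝ := 2 * max R 0 + 1 with hC
    have hCpos : 0 < C := by positivity
    have hnormA : ∀ a ∈ A₁ ∪ A₂, ‖a‖ ≤ max R 0 := by
      intro a ha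
      have := hR ha
      rw [mem_closedBall, dist_zero_right] at this
      exact le_trans this (le_max_left _ _)
    -- the sequence of approximation points
    have hex : ∀ n : ℕ, ∃ z : EuclideanSpace ℝ (Fin d), dist z (x - (1 / (n + 1) : ℝ) • w) < (1 / (n + 1) : ℝ) ^ 2
        ∧ DifferentiableAt ℝ Φ z := by
      intro n
      exact exists_diff_near A₁ A₂ lam _ (by positivity)
    choose z hzd hzdiff using hex
    choose p₁ hp₁ using fun n => nearest_exists hA₁cpt hA₁ (z n)
    choose p₂ hp₂ using fun n => nearest_exists hA₂cpt hA₂ (z n)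
    have htn : ∀ n : ℕ, (0:ℝ) < 1 / (n + 1) := fun n => by positivity
    -- z tends to x
    have hzx : Filter.Tendsto z atTop (nhds x) := by
      rw [tendsto_iff_dist_tendsto_zero]
      have hb : ∀ n : ℕ, dist (z n) x ≤ (1 / (n+1) : ℝ) ^ 2 + (1 / (n+1) : ℝ) * ‖w‖ := by
        intro n
        have h1 : dist (z n) x ≤ dist (z n) (x - (1 / (n + 1) : ℝ) • w)
            + dist (x - (1 / (n + 1) : ℝ) • w) x := dist_triangle _ _ _
        have h2 : dist (x - (1 / (n + 1) : ℝ) • w) x = (1 / (n+1) : ℝ) * ‖w‖ := by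
          rw [dist_eq_norm]
          have : x - (1 / (n + 1) : ℝ) • w - x = -((1 / (n + 1) : ℝ) • w) := by abel
          rw [this, norm_neg, norm_smul, Real.norm_eq_abs, abs_of_pos (htn n)]
        linarith [(hzd n).le]
      have hlim : Filter.Tendsto (fun n : ℕ => (1 / (n+1) : ℝ) ^ 2 + (1 / (n+1) : ℝ) * ‖w‖)
          atTop (nhds 0) := by
        have h1 := tendsto_one_div_add_atTop_nhds_zero_nat (𝕜 := ℝ)
        have := ((h1.mul h1).add (h1.mul (tendsto_const_nhds (x := ‖w‖))))
        simpa [sq] using this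
      exact squeeze_zero (fun n => dist_nonneg) hb hlim
    -- inner product bounds on nearest points
    have hbound : ∀ (n : ℕ) (b p : EuclideanSpace ℝ (Fin d)), b ∈ A₁ ∪ A₂ → p ∈ A₁ ∪ A₂ →
        ‖z n - p‖ ≤ ‖z n - b‖ → ‖x - b‖ ≤ ‖x - p‖ →
        ⟪w, p⟫ ≤ ⟪w, b⟫ + (1 / (n+1) : ℝ) * C := by
      intro n b p hbA hpA hzp hxb
      have hkey := inner_step (x := x) (z := z n) (w := w) (t := (1 / (n+1) : ℝ)) hzp hxb
      have he : ‖z n - x + (1 / (n+1) : ℝ) • w‖ ≤ (1 / (n+1) : ℝ) ^ 2 := by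
        have : z n - x + (1 / (n+1) : ℝ) • w = z n - (x - (1 / (n+1) : ℝ) • w) := by abel
        rw [this, ← dist_eq_norm]
        exact (hzd n).le
      have hpb : ‖p - b‖ ≤ 2 * max R 0 :=
        le_trans (norm_sub_le _ _) (by linarith [hnormA p hpA, hnormA b hbA])
      have hib : ⟪z n - x + (1 / (n+1) : ℝ) • w, p - b⟫ ≤ (1 / (n+1) : ℝ) ^ 2 * C := by
        calc ⟪z n - x + (1 / (n+1) : ℝ) • w, p - b⟫
            ≤ ‖z n - x + (1 / (n+1) : ℝ) • w‖ * ‖p - b‖ := real_inner_le_norm _ _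
          _ ≤ (1 / (n+1) : ℝ) ^ 2 * C := by
              apply mul_le_mul he (by linarith) (norm_nonneg _)
              positivity
      have h' : (1 / (n+1) : ℝ) * ⟪w, p⟫ ≤ (1 / (n+1) : ℝ) * (⟪w, b⟫ + (1 / (n+1) : ℝ) * C) := by
        have hsq : (1 / (n+1) : ℝ) ^ 2 * C = (1 / (n+1) : ℝ) * ((1 / (n+1) : ℝ) * C) := by ring
        calc (1 / (n+1) : ℝ) * ⟪w, p⟫
            ≤ (1 / (n+1) : ℝ) * ⟪w, b⟫ + ⟪z n - x + (1 / (n+1) : ℝ) • w, p - b⟫ := hkey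
          _ ≤ (1 / (n+1) : ℝ) * ⟪w, b⟫ + (1 / (n+1) : ℝ) ^ 2 * C := by linarith
          _ = (1 / (n+1) : ℝ) * (⟪w, b⟫ + (1 / (n+1) : ℝ) * C) := by ring
      exact le_of_mul_le_mul_left h' (htn n)
    have hin₁ : ∀ n : ℕ, ⟪w, p₁ n⟫ ≤ ⟪w, b₁⟫ + (1 / (n+1) : ℝ) * C := by
      intro n
      apply hbound n b₁ (p₁ n) (Set.mem_union_left _ hb₁.1) (Set.mem_union_left _ (hp₁ n).1)
      · rw [(hp₁ n).2, ← dist_eq_norm]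
        exact infDist_le_dist_of_mem hb₁.1
      · rw [hb₁.2, ← dist_eq_norm]
        exact infDist_le_dist_of_mem (hp₁ n).1
    have hin₂ : ∀ n : ℕ, ⟪w, p₂ n⟫ ≤ ⟪w, b₂⟫ + (1 / (n+1) : ℝ) * C := by
      intro n
      apply hbound n b₂ (p₂ n) (Set.mem_union_right _ hb₂.1) (Set.mem_union_right _ (hp₂ n).1)
      · rw [(hp₂ n).2, ← dist_eq_norm]
        exact infDist_le_dist_of_mem hb₂.1
      · rw [hb₂.2, ← dist_eq_norm]
        exact infDist_le_dist_of_mem (hp₂ n).1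
    -- subsequences
    obtain ⟨σ, q₁, q₂, hσtop, hq₁, hq₂, hlim₁, hlim₂⟩ :=
      subseq_nearest hA₁cpt hA₂cpt hzx hp₁ hp₂
    have hrate : Filter.Tendsto (fun k : ℕ => (1 / (σ k + 1) : ℝ) * C) atTop (nhds 0) := by
      have := (tendsto_one_div_add_atTop_nhds_zero_nat.comp hσtop).mul
        (tendsto_const_nhds (x := C))
      simpa using this
    have hq₁le : ⟪w, q₁⟫ ≤ ⟪w, b₁⟫ := by
      have hl : Filter.Tendsto (fun k => ⟪w, p₁ (σ k)⟫) atTop (nhds ⟪w, q₁⟫) :=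
        (tendsto_const_nhds.inner hlim₁)
      have hr : Filter.Tendsto (fun k : ℕ => ⟪w, b₁⟫ + (1 / (σ k + 1) : ℝ) * C) atTop
          (nhds ⟪w, b₁⟫) := by
        have := (tendsto_const_nhds (x := ⟪w, b₁⟫) (f := atTop (α := ℕ))).add hrate
        simpa using this
      exact le_of_tendsto_of_tendsto hl hr (Filter.Eventually.of_forall fun k => hin₁ (σ k))
    have hq₂le : ⟪w, q₂⟫ ≤ ⟪w, b₂⟫ := by
      have hl : Filter.Tendsto (fun k => ⟪w, p₂ (σ k)⟫) atTop (nhds ⟪w, q₂⟫) :=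
        (tendsto_const_nhds.inner hlim₂)
      have hr : Filter.Tendsto (fun k : ℕ => ⟪w, b₂⟫ + (1 / (σ k + 1) : ℝ) * C) atTop
          (nhds ⟪w, b₂⟫) := by
        have := (tendsto_const_nhds (x := ⟪w, b₂⟫) (f := atTop (α := ℕ))).add hrate
        simpa using this
      exact le_of_tendsto_of_tendsto hl hr (Filter.Eventually.of_forall fun k => hin₂ (σ k))
    -- membership in S
    have hmem : f q₁ q₂ ∈ S := by
      refine ⟨fun k => z (σ k), hzx.comp hσtop, fun k => hzdiff (σ k), ?_⟩
      have hgradeq : (fun k => gradient Φ (z (σ k))) =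
          fun k => (2 * lam) • (z (σ k) - p₁ (σ k)) + (2 * (1 - lam)) • (z (σ k) - p₂ (σ k)) :=
        funext fun k => grad_formula hlam₀ hlam₁ (hp₁ (σ k)) (hp₂ (σ k)) (hzdiff (σ k))
      rw [hgradeq]
      exact ((((hzx.comp hσtop).sub hlim₁).const_smul (2 * lam)).add
        (((hzx.comp hσtop).sub hlim₂).const_smul (2 * (1 - lam))))
    exact ⟨q₁, hq₁, q₂, hq₂, hq₁le, hq₂le, hmem⟩
  -- S is nonempty
  obtain ⟨b₁0, hb₁0⟩ := nearest_exists hA₁cpt hA₁ x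
  obtain ⟨b₂0, hb₂0⟩ := nearest_exists hA₂cpt hA₂ x
  obtain ⟨q₁0, hq₁0, q₂0, hq₂0, -, -, hS0⟩ := construct 0 b₁0 b₂0 hb₁0 hb₂0
  have hSne : S.Nonempty := ⟨f q₁0 q₂0, hS0⟩
  -- compactness facts
  have hPi1 : IsCompact (nearestPts A₁ x) := nearest_compact hA₁cpt x
  have hPi2 : IsCompact (nearestPts A₂ x) := nearest_compact hA₂cpt x
  have hTcpt : IsCompact T := by
    rw [hT, ← Set.image_prod]
    apply (hPi1.prod hPi2).image
    apply Continuous.add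
    · exact (continuous_const.sub continuous_fst).fun_const_smul _
    · exact (continuous_const.sub continuous_snd).fun_const_smul _
  have hSclosed : IsClosed S := limitSet_closed Φ x
  have hScpt : IsCompact S := hTcpt.of_isClosed_subset hSclosed hST
  have hCScpt : IsCompact (convexHull ℝ S) := isCompact_convexHull_euclidean hScpt hSne
  -- T ⊆ convexHull S
  have hTsub : T ⊆ convexHull ℝ S := by
    rintro v ⟨a₁, ha₁, a₂, ha₂, rfl⟩
    by_contra hvn
    obtain ⟨g, u₀, hglt, hgv⟩ :=
      geometric_hahn_banach_closed_point (convex_convexHull ℝ S) hCScpt.isClosed hvn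
    set w : EuclideanSpace ℝ (Fin d) := (InnerProductSpace.toDual ℝ (EuclideanSpace ℝ (Fin d))).symm g with hw
    have hwapp : ∀ y : EuclideanSpace ℝ (Fin d), ⟪w, y⟫ = g y := fun y => InnerProductSpace.toDual_symm_apply
    have hwc : Continuous fun a : EuclideanSpace ℝ (Fin d) => ⟪w, a⟫ := continuous_const.inner continuous_id
    obtain ⟨b₁, hb1Pi, hb₁min⟩ := hPi1.exists_isMinOn ⟨a₁, ha₁⟩ hwc.continuousOn
    obtain ⟨b₂, hb2Pi, hb₂min⟩ := hPi2.exists_isMinOn ⟨a₂, ha₂⟩ hwc.continuousOn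
    obtain ⟨q₁, hq₁, q₂, hq₂, hle₁, hle₂, hfS⟩ := construct w b₁ b₂ hb1Pi hb2Pi
    have h1 : g (f q₁ q₂) < u₀ := hglt _ (subset_convexHull ℝ S hfS)
    have h2 : u₀ < g (f a₁ a₂) := hgv
    have hgval : ∀ c₁ c₂ : EuclideanSpace ℝ (Fin d), g (f c₁ c₂) =
        2 * lam * (g x - g c₁) + 2 * (1 - lam) * (g x - g c₂) := by
      intro c₁ c₂
      simp only [hf, map_add, _root_.map_smul, map_sub, smul_eq_mul]
    have hc₁ : g q₁ ≤ g a₁ := by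
      rw [← hwapp, ← hwapp]
      exact le_trans hle₁ (hb₁min ha₁)
    have hc₂ : g q₂ ≤ g a₂ := by
      rw [← hwapp, ← hwapp]
      exact le_trans hle₂ (hb₂min ha₂)
    have hcmp : g (f a₁ a₂) ≤ g (f q₁ q₂) := by
      rw [hgval, hgval]
      have t₁ : 2 * lam * (g x - g a₁) ≤ 2 * lam * (g x - g q₁) :=
        mul_le_mul_of_nonneg_left (by linarith) (by linarith)
      have t₂ : 2 * (1 - lam) * (g x - g a₂) ≤ 2 * (1 - lam) * (g x - g q₂) :=
        mul_le_mul_of_nonneg_left (by linarith) (by linarith)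
      linarith
    linarith
  -- conclusion
  have hclarke : clarkeSubdiff Φ x = convexHull ℝ S := rfl
  rw [hclarke]
  apply Set.Subset.antisymm
  · exact convexHull_mono hST
  · exact convexHull_min hTsub (convex_convexHull ℝ S)
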